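/- Let p be prime and (A_p, f) the affine connected quandle of order p, with n the order of t mod p. Then the permutation representation of Inn(A_p) on C[A_p] decomposes multiplicity-free as the direct sum of the trivial representation and all (p-1)/n distinct n-dimensional irreducible representations of Inn(A_p) ≅ Z_p ⋊ Z_n, each appearing exactly once. -/

import Mathlib

namespace Stmt13Aux

open Finset Submodule

variable {p : ℕ} [Fact p.Prime]

/-- The Fourier basis vector `e_c`. -/
noncomputable def ee (c : ZMod p) : ZMod p → ℂ := fun x => ZMod.stdAddChar (c * x)

lemma pC_ne : ((p : ℂ)) ≠ 0 := by
  exact_mod_cast (Fact.out : p.Prime).ne_zero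

lemma psi_inj : Function.Injective (ZMod.stdAddChar : ZMod p → ℂ) :=
  ZMod.injective_stdAddChar

lemma psi_sum (c : ZMod p) :
    ∑ b : ZMod p, ZMod.stdAddChar (c * b) = if c = 0 then (p : ℂ) else 0 := by
  classical
  have h := AddChar.sum_mulShift (ψ := ZMod.stdAddChar) c (ZMod.isPrimitive_stdAddChar p)
  simp only [mul_comm] at h
  rw [h, ZMod.card p]
  split <;> simp

lemma ee_ne_zero (c : ZMod p) : ee c ≠ 0 := by
  intro h
  have := congrFun h 0
  simp [ee, Pi.zero_apply, AddChar.map_zero_eq_one] at this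

/-- Fourier coefficient functional. -/
noncomputable def FF (d : ZMod p) : (ZMod p → ℂ) →ₗ[ℂ] ℂ where
  toFun f := (p : ℂ)⁻¹ * ∑ y, ZMod.stdAddChar (-(d * y)) * f y
  map_add' f g := by
    simp only [Pi.add_apply, mul_add, Finset.sum_add_distrib]
  map_smul' a f := by
    simp only [Pi.smul_apply, smul_eq_mul, RingHom.id_apply, Finset.mul_sum]
    congr 1
    ext y
    ring

lemma FF_apply (d : ZMod p) (f : ZMod p → ℂ) :
    FF d f = (p : ℂ)⁻¹ * ∑ y, ZMod.stdAddChar (-(d * y)) * f y := rfl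

lemma FF_ee (d c : ZMod p) : FF d (ee c) = if c = d then 1 else 0 := by
  rw [FF_apply]
  have h : ∀ y : ZMod p, ZMod.stdAddChar (-(d * y)) * ee c y
      = ZMod.stdAddChar ((c - d) * y) := by
    intro y
    rw [ee, ← AddChar.map_add_eq_mul]
    congr 1
    ring
  rw [Finset.sum_congr rfl fun y _ => h y, psi_sum]
  by_cases hcd : c = d
  · rw [if_pos (by rw [hcd, sub_self]), if_pos hcd, inv_mul_cancel₀ pC_ne]
  · rw [if_neg (fun hc => hcd (sub_eq_zero.mp hc)), if_neg hcd, mul_zero]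

/-- Fourier inversion. -/
lemma fourier (f : ZMod p → ℂ) : f = ∑ c, FF c f • ee c := by
  funext x
  rw [Finset.sum_apply]
  have h1 : ∀ c : ZMod p, (FF c f • ee c) x
      = (p : ℂ)⁻¹ * ∑ y, f y * ZMod.stdAddChar (c * (x - y)) := by
    intro c
    rw [Pi.smul_apply, smul_eq_mul, FF_apply, ee, mul_assoc, Finset.sum_mul]
    congr 1
    refine Finset.sum_congr rfl fun y _ => ?_
    rw [show c * (x - y) = c * x + -(c * y) by ring, AddChar.map_add_eq_mul]
    ring
  rw [Finset.sum_congr rfl fun c _ => h1 c, ← Finset.mul_sum, Finset.sum_comm]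
  have h2 : ∀ y : ZMod p, ∑ c : ZMod p, f y * ZMod.stdAddChar (c * (x - y))
      = f y * (if x - y = 0 then (p : ℂ) else 0) := by
    intro y
    rw [← Finset.mul_sum]
    congr 1
    rw [← psi_sum (x - y)]
    exact Finset.sum_congr rfl fun c _ => by rw [mul_comm]
  rw [Finset.sum_congr rfl fun y _ => h2 y]
  have h3 : ∀ y : ZMod p, f y * (if x - y = 0 then (p : ℂ) else 0)
      = if y = x then f y * (p:ℂ) else 0 := by
    intro y
    by_cases h : y = x
    · rw [if_pos h, if_pos (by rw [h, sub_self])]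
    · rw [if_neg h, if_neg (fun hc => h (by linear_combination -hc)), mul_zero]
  rw [Finset.sum_congr rfl fun y _ => h3 y, Finset.sum_ite_eq' Finset.univ x (fun y => f y * p),
    if_pos (Finset.mem_univ x)]
  rw [mul_comm (f x), ← mul_assoc, inv_mul_cancel₀ pC_ne, one_mul]

lemma FF_vanish {s : Set (ZMod p)} {f : ZMod p → ℂ} (hf : f ∈ span ℂ (ee '' s))
    {d : ZMod p} (hd : d ∉ s) : FF d f = 0 := by
  induction hf using Submodule.span_induction with
  | mem g hg =>
    obtain ⟨c, hc, rfl⟩ := hg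
    rw [FF_ee, if_neg]
    rintro rfl
    exact hd hc
  | zero => simp
  | add _ _ _ _ h1 h2 => rw [map_add, h1, h2, add_zero]
  | smul a _ _ h => rw [map_smul, h, smul_zero]


section Perms

variable {t : ZMod p}

/-- The generating set of `Inn`. -/
def genSet (t : ZMod p) : Set (Equiv.Perm (ZMod p)) :=
  {σ : Equiv.Perm (ZMod p) | ∃ j : ZMod p, ∀ x, σ x = t * x + (1 - t) * j}

/-- The right translation `R_j`. -/
def Rj (ht0 : t ≠ 0) (j : ZMod p) : Equiv.Perm (ZMod p) :=
  (Equiv.mulLeft₀ t ht0).trans (Equiv.addRight ((1 - t) * j))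

lemma Rj_apply (ht0 : t ≠ 0) (j x : ZMod p) : Rj ht0 j x = t * x + (1 - t) * j := rfl

lemma Rj_mem (ht0 : t ≠ 0) (j : ZMod p) : Rj ht0 j ∈ Subgroup.closure (genSet t) :=
  Subgroup.subset_closure ⟨j, fun _ => rfl⟩

lemma Tb_mem (ht0 : t ≠ 0) (ht1 : t ≠ 1) (b : ZMod p) :
    Equiv.addRight b ∈ Subgroup.closure (genSet t) := by
  have h1t : (1 - t) ≠ 0 := sub_ne_zero_of_ne (Ne.symm ht1)
  have key : Equiv.addRight b * Rj ht0 0 = Rj ht0 ((1 - t)⁻¹ * b) := by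
    apply Equiv.ext
    intro x
    rw [Equiv.Perm.mul_apply, Rj_apply, Rj_apply]
    show (t * x + (1 - t) * 0) + b = _
    rw [mul_zero, add_zero, ← mul_assoc, mul_inv_cancel₀ h1t, one_mul]
  have : Equiv.addRight b = Rj ht0 ((1 - t)⁻¹ * b) * (Rj ht0 0)⁻¹ :=
    eq_mul_inv_of_mul_eq key
  rw [this]
  exact mul_mem (Rj_mem ht0 _) (inv_mem (Rj_mem ht0 0))

lemma Mul_mem (ht0 : t ≠ 0) : Equiv.mulLeft₀ t ht0 ∈ Subgroup.closure (genSet t) :=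
  Subgroup.subset_closure ⟨0, fun x => by
    rw [mul_zero, add_zero]; rfl⟩

/-- The affine group: all maps `x ↦ t^k x + c`. -/
def Gaff (t : ZMod p) (n : ℕ) (htn : t ^ n = 1) (hn0 : 0 < n) :
    Subgroup (Equiv.Perm (ZMod p)) where
  carrier := {σ | ∃ (k : ℕ) (c : ZMod p), ∀ x, σ x = t ^ k * x + c}
  one_mem' := ⟨0, 0, fun x => by simp⟩
  mul_mem' := by
    rintro σ τ ⟨k, c, hσ⟩ ⟨l, d, hτ⟩
    refine ⟨k + l, t ^ k * d + c, fun x => ?_⟩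
    rw [Equiv.Perm.mul_apply, hτ, hσ, pow_add]
    ring
  inv_mem' := by
    rintro σ ⟨k, c, hσ⟩
    refine ⟨k * (n - 1), -(t ^ (k * (n - 1)) * c), fun x => ?_⟩
    have hkn : k * n = k * (n - 1) + k := by
      conv_lhs => rw [show n = (n - 1) + 1 from (Nat.succ_pred_eq_of_pos hn0).symm]
      rw [Nat.mul_succ]
    have hs : t ^ k * t ^ (k * (n - 1)) = 1 := by
      rw [← pow_add, show k + k * (n - 1) = n * k by rw [Nat.mul_comm n k]; omega, pow_mul, htn, one_pow]
    apply σ.injective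
    rw [show σ (σ⁻¹ x) = x from Equiv.apply_symm_apply σ x, hσ]
    have : t ^ k * (t ^ (k * (n - 1)) * x + -(t ^ (k * (n - 1)) * c)) + c
        = (t ^ k * t ^ (k * (n - 1))) * x - (t ^ k * t ^ (k * (n - 1))) * c + c := by ring
    rw [this, hs, one_mul, one_mul, sub_add_cancel]

lemma closure_le_Gaff (htn : t ^ n = 1) (hn0 : 0 < n) :
    Subgroup.closure (genSet t) ≤ Gaff t n htn hn0 := by
  refine (Subgroup.closure_le _).mpr ?_
  rintro σ ⟨j, hj⟩
  exact ⟨1, (1 - t) * j, fun x => by rw [hj x, pow_one]⟩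

end Perms


section Helper

lemma addRight_symm_apply (b x : ZMod p) : (Equiv.addRight b).symm x = x - b := by
  simp [Equiv.addRight, sub_eq_add_neg]

lemma comp_translate (d b : ZMod p) :
    ee d ∘ (Equiv.addRight b).symm = ZMod.stdAddChar (-(d * b)) • ee d := by
  funext x
  rw [Function.comp_apply, addRight_symm_apply, Pi.smul_apply, smul_eq_mul, ee, ee,
    show d * (x - b) = -(d * b) + d * x by ring, AddChar.map_add_eq_mul]

lemma FF_translate (c b : ZMod p) (f : ZMod p → ℂ) :
    FF c (f ∘ (Equiv.addRight b).symm) = ZMod.stdAddChar (-(c * b)) * FF c f := by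
  rw [FF_apply, FF_apply]
  have hre : ∑ y : ZMod p, ZMod.stdAddChar (-(c * y)) * (f ∘ (Equiv.addRight b).symm) y
      = ∑ z : ZMod p, ZMod.stdAddChar (-(c * b)) * (ZMod.stdAddChar (-(c * z)) * f z) := by
    refine (Fintype.sum_equiv (Equiv.addRight b)
      (fun z => ZMod.stdAddChar (-(c * b)) * (ZMod.stdAddChar (-(c * z)) * f z))
      (fun y => ZMod.stdAddChar (-(c * y)) * (f ∘ (Equiv.addRight b).symm) y)
      (fun z => ?_)).symm
    show ZMod.stdAddChar (-(c * b)) * (ZMod.stdAddChar (-(c * z)) * f z)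
        = ZMod.stdAddChar (-(c * (z + b))) * (f ∘ (Equiv.addRight b).symm) (z + b)
    rw [Function.comp_apply, addRight_symm_apply, add_sub_cancel_right,
      show -(c * (z + b)) = -(c * b) + -(c * z) by ring, AddChar.map_add_eq_mul, mul_assoc]
  rw [hre, ← Finset.mul_sum]
  ring

lemma proj_eq (d : ZMod p) (f : ZMod p → ℂ) :
    (FF d f) • ee d
      = ∑ b : ZMod p, ((p : ℂ)⁻¹ * ZMod.stdAddChar (d * b)) • (f ∘ (Equiv.addRight b).symm) := by
  funext x
  rw [Finset.sum_apply]
  have hre : ∑ b : ZMod p, (((p : ℂ)⁻¹ * ZMod.stdAddChar (d * b)) • (f ∘ (Equiv.addRight b).symm)) x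
      = ∑ y : ZMod p, (p : ℂ)⁻¹ * (ZMod.stdAddChar (d * x) * (ZMod.stdAddChar (-(d * y)) * f y)) := by
    refine (Fintype.sum_equiv (Equiv.subLeft x)
      (fun y => (p : ℂ)⁻¹ * (ZMod.stdAddChar (d * x) * (ZMod.stdAddChar (-(d * y)) * f y)))
      (fun b => (((p : ℂ)⁻¹ * ZMod.stdAddChar (d * b)) • (f ∘ (Equiv.addRight b).symm)) x)
      (fun y => ?_)).symm
    show (p : ℂ)⁻¹ * (ZMod.stdAddChar (d * x) * (ZMod.stdAddChar (-(d * y)) * f y))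
        = (((p : ℂ)⁻¹ * ZMod.stdAddChar (d * (x - y))) • (f ∘ (Equiv.addRight (x - y)).symm)) x
    rw [Pi.smul_apply, smul_eq_mul, Function.comp_apply, addRight_symm_apply, sub_sub_cancel,
      show d * (x - y) = d * x + -(d * y) by ring, AddChar.map_add_eq_mul]
    ring
  rw [hre, Pi.smul_apply, smul_eq_mul, FF_apply, ee, ← Finset.mul_sum, ← Finset.mul_sum]
  ring

end Helper

section Orbits

variable (u : (ZMod p)ˣ)

def Oset (qq : (ZMod p)ˣ ⧸ Subgroup.zpowers u) : Set (ZMod p) :=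
  {c | ∃ w : (ZMod p)ˣ, (QuotientGroup.mk w : _ ⧸ Subgroup.zpowers u) = qq ∧ (w : ZMod p) = c}

lemma zero_not_mem_Oset (qq) : (0 : ZMod p) ∉ Oset u qq := by
  rintro ⟨w, -, hw⟩
  exact w.ne_zero hw

lemma Oset_mul_mem {qq} {c : ZMod p} (hc : c ∈ Oset u qq) : (u : ZMod p) * c ∈ Oset u qq := by
  obtain ⟨w, h1, h2⟩ := hc
  refine ⟨u * w, ?_, by rw [Units.val_mul, h2]⟩
  rw [QuotientGroup.mk_mul,
    show (QuotientGroup.mk u : _ ⧸ Subgroup.zpowers u) = 1 from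
      (QuotientGroup.eq_one_iff u).mpr (Subgroup.mem_zpowers u)]
  rw [h1]
  exact one_mul qq

lemma Oset_exists_pow {qq} {c d : ZMod p} (hc : c ∈ Oset u qq) (hd : d ∈ Oset u qq) :
    ∃ k : ℕ, c = (u : ZMod p) ^ k * d := by
  obtain ⟨w, hw1, rfl⟩ := hc
  obtain ⟨v, hv1, rfl⟩ := hd
  have hq : (QuotientGroup.mk v : _ ⧸ Subgroup.zpowers u) = QuotientGroup.mk w := by
    rw [hv1, hw1]
  have hmem : v⁻¹ * w ∈ Subgroup.zpowers u := QuotientGroup.eq.mp hq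
  obtain ⟨k, hk⟩ := mem_powers_iff_mem_zpowers.mpr hmem
  refine ⟨k, ?_⟩
  have hk' : u ^ k = v⁻¹ * w := hk
  have hw : w = v * u ^ k := by rw [hk', mul_inv_cancel_left]
  rw [hw, Units.val_mul, Units.val_pow_eq_pow_val]
  ring

lemma Oset_disjoint {qq qq'} (h : qq ≠ qq') {c : ZMod p} (hc : c ∈ Oset u qq)
    (hc' : c ∈ Oset u qq') : False := by
  obtain ⟨w, hw1, hw2⟩ := hc
  obtain ⟨v, hv1, hv2⟩ := hc'
  have hwv : w = v := Units.ext (by rw [hw2, hv2])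
  exact h (by rw [← hw1, hwv, hv1])

lemma Oset_nonempty (qq) : ∃ c, c ∈ Oset u qq := by
  obtain ⟨w, rfl⟩ := QuotientGroup.mk_surjective qq
  exact ⟨w, w, rfl, rfl⟩

lemma Oset_card (qq) : Nat.card (Oset u qq) = Nat.card (Subgroup.zpowers u) := by
  have himg : Oset u qq
      = Units.val '' ((QuotientGroup.mk ⁻¹' {qq}) : Set (ZMod p)ˣ) := by
    ext c
    constructor
    · rintro ⟨w, h1, h2⟩
      exact ⟨w, h1, h2⟩
    · rintro ⟨w, h1, h2⟩
      exact ⟨w, h1, h2⟩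
  rw [himg, Nat.card_image_of_injective Units.val_injective]
  have e := QuotientGroup.preimageMkEquivSubgroupProdSet (Subgroup.zpowers u) ({qq} : Set _)
  have h1 : Nat.card ({qq} : Set ((ZMod p)ˣ ⧸ Subgroup.zpowers u)) = 1 := Nat.card_unique
  rw [Nat.card_congr e, Nat.card_prod, h1, mul_one]

end Orbits

end Stmt13Aux
open Stmt13Aux

/-- For `p` prime and the affine connected quandle `(A_p, f)` (`f(x) = t*x`,
`t` of order `n` mod `p`), the permutation representation of `Inn(A_p)` (the group of
permutations of `Z_p` generated by the right translations `R_j : x ↦ t*x + (1-t)*j`) on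
`C[A_p] = (Z_p → ℂ)` decomposes multiplicity-free as the direct sum of the trivial
representation and all `(p-1)/n` distinct `n`-dimensional irreducible representations,
each appearing exactly once: there are invariant subspaces `W 0, ..., W ((p-1)/n)`,
independent with supremum everything, `W 0` one-dimensional with trivial action, the
others `n`-dimensional, each irreducible, and pairwise non-isomorphic as representations. -/
theorem stmt13 (p n : ℕ) (hp : p.Prime) (t : ZMod p) (ht0 : t ≠ 0) (ht1 : t ≠ 1)
    (horder : orderOf t = n)
    (Inn : Subgroup (Equiv.Perm (ZMod p)))
    (hInn : Inn = Subgroup.closure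
      {σ : Equiv.Perm (ZMod p) | ∃ j : ZMod p, ∀ x, σ x = t * x + (1 - t) * j}) :
    ∃ W : Fin ((p - 1) / n + 1) → Submodule ℂ (ZMod p → ℂ),
      (∀ i, ∀ σ ∈ Inn, ∀ f ∈ W i, (f ∘ σ.symm) ∈ W i) ∧
      iSup W = ⊤ ∧
      iSupIndep W ∧
      Module.finrank ℂ (W 0) = 1 ∧
      (∀ σ ∈ Inn, ∀ f ∈ W 0, f ∘ σ.symm = f) ∧
      (∀ i, i ≠ 0 → Module.finrank ℂ (W i) = n) ∧
      (∀ i, i ≠ 0 → ∀ U : Submodule ℂ (ZMod p → ℂ), U ≤ W i →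
        (∀ σ ∈ Inn, ∀ f ∈ U, (f ∘ σ.symm) ∈ U) → U = ⊥ ∨ U = W i) ∧
      (∀ i j, i ≠ j →
        ¬ ∃ e : (ZMod p → ℂ) →ₗ[ℂ] (ZMod p → ℂ),
            Submodule.map e (W i) = W j ∧ Set.InjOn e (W i) ∧
            ∀ σ ∈ Inn, ∀ f ∈ W i, e (f ∘ σ.symm) = (e f) ∘ σ.symm) := by
  haveI : Fact p.Prime := ⟨hp⟩
  classical
  open Submodule in
  set u : (ZMod p)ˣ := Units.mk0 t ht0 with hu
  have hut : (u : ZMod p) = t := rfl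
  have hordu : orderOf u = n := by
    have h := horder
    rw [← hut, orderOf_units] at h
    exact h
  have hn0 : 0 < n := hordu ▸ orderOf_pos u
  have htn : t ^ n = 1 := by rw [← horder]; exact pow_orderOf_eq_one t
  haveI : Fintype ((ZMod p)ˣ ⧸ Subgroup.zpowers u) := Fintype.ofFinite _
  have hQ : Fintype.card ((ZMod p)ˣ ⧸ Subgroup.zpowers u) = (p - 1) / n := by
    have h1 := Subgroup.card_eq_card_quotient_mul_card_subgroup (Subgroup.zpowers u)
    rw [Nat.card_zpowers, hordu, Nat.card_eq_fintype_card, Nat.card_eq_fintype_card,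
      ZMod.card_units p] at h1
    rw [← Nat.card_eq_fintype_card]
    rw [Nat.card_eq_fintype_card]
    exact (Nat.div_eq_of_eq_mul_left hn0 h1).symm
  let κ : Fin ((p - 1) / n) ≃ (ZMod p)ˣ ⧸ Subgroup.zpowers u :=
    (Fintype.equivFinOfCardEq hQ).symm
  let Orb : Fin ((p - 1) / n + 1) → Set (ZMod p) := Fin.cases {0} fun j => Oset u (κ j)
  have hOr0 : Orb 0 = {0} := by simp only [Orb, Fin.cases_zero]
  have hOrS : ∀ j, Orb j.succ = Oset u (κ j) := fun j => by simp only [Orb, Fin.cases_succ]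
  have hOr_mul : ∀ i, ∀ c ∈ Orb i, t * c ∈ Orb i := by
    intro i c hc
    rcases Fin.eq_zero_or_eq_succ i with rfl | ⟨j, rfl⟩
    · rw [hOr0] at hc ⊢
      rw [Set.mem_singleton_iff] at hc ⊢
      rw [hc, mul_zero]
    · rw [hOrS] at hc ⊢
      exact hut ▸ Oset_mul_mem u hc
  have hOr_pow : ∀ i (m : ℕ), ∀ c ∈ Orb i, t ^ m * c ∈ Orb i := by
    intro i m
    induction m with
    | zero => intro c hc; rwa [pow_zero, one_mul]
    | succ m ih =>
      intro c hc
      have h := hOr_mul i _ (ih c hc)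
      rwa [show t * (t ^ m * c) = t ^ (m + 1) * c by ring] at h
  have hOr_rel : ∀ i, ∀ c ∈ Orb i, ∀ d ∈ Orb i, ∃ k : ℕ, c = t ^ k * d := by
    intro i c hc d hd
    rcases Fin.eq_zero_or_eq_succ i with rfl | ⟨j, rfl⟩
    · rw [hOr0, Set.mem_singleton_iff] at hc hd
      exact ⟨0, by rw [hc, hd, pow_zero, one_mul]⟩
    · rw [hOrS] at hc hd
      obtain ⟨k, hk⟩ := Oset_exists_pow u hc hd
      exact ⟨k, by rwa [hut] at hk⟩
  have hOr_disj : ∀ i j, i ≠ j → ∀ c, c ∈ Orb i → c ∈ Orb j → False := by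
    intro i j hij c hci hcj
    rcases Fin.eq_zero_or_eq_succ i with rfl | ⟨i', rfl⟩ <;>
      rcases Fin.eq_zero_or_eq_succ j with rfl | ⟨j', rfl⟩
    · exact hij rfl
    · rw [hOr0, Set.mem_singleton_iff] at hci
      rw [hOrS] at hcj
      exact zero_not_mem_Oset u _ (hci ▸ hcj)
    · rw [hOr0, Set.mem_singleton_iff] at hcj
      rw [hOrS] at hci
      exact zero_not_mem_Oset u _ (hcj ▸ hci)
    · rw [hOrS] at hci hcj
      have hκ : κ i' ≠ κ j' := fun h => hij (congrArg Fin.succ (κ.injective h))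
      exact Oset_disjoint u hκ hci hcj
  have hOr_cover : ∀ c : ZMod p, ∃ i, c ∈ Orb i := by
    intro c
    by_cases hc : c = 0
    · exact ⟨0, by rw [hOr0, hc]; exact Set.mem_singleton 0⟩
    · refine ⟨(κ.symm (QuotientGroup.mk (Units.mk0 c hc))).succ, ?_⟩
      rw [hOrS, Equiv.apply_symm_apply]
      exact ⟨Units.mk0 c hc, rfl, rfl⟩
  have hOr_ne : ∀ i, ∃ c, c ∈ Orb i := by
    intro i
    rcases Fin.eq_zero_or_eq_succ i with rfl | ⟨j, rfl⟩
    · exact ⟨0, by rw [hOr0]; exact Set.mem_singleton 0⟩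
    · rw [hOrS]; exact Oset_nonempty u _
  let W : Fin ((p - 1) / n + 1) → Submodule ℂ (ZMod p → ℂ) := fun i => span ℂ (ee '' Orb i)
  have hle : Inn ≤ Gaff t n htn hn0 := by
    rw [hInn]; exact closure_le_Gaff htn hn0
  have hsymm : ∀ σ ∈ Inn, ∃ (k : ℕ) (c : ZMod p), ∀ x, σ.symm x = t ^ k * x + c := by
    intro σ hσ
    obtain ⟨k, c, h⟩ := hle (inv_mem hσ)
    exact ⟨k, c, fun x => h x⟩
  have hWinv : ∀ i, ∀ σ ∈ Inn, ∀ f ∈ W i, (f ∘ σ.symm) ∈ W i := by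
    intro i σ hσ f hf
    obtain ⟨k, c, hs⟩ := hsymm σ hσ
    induction hf using Submodule.span_induction with
    | mem g hg =>
      obtain ⟨d, hd, rfl⟩ := hg
      have hcomp : ee d ∘ σ.symm = ZMod.stdAddChar (d * c) • ee (t ^ k * d) := by
        funext x
        rw [Function.comp_apply, hs x, Pi.smul_apply, smul_eq_mul, ee, ee,
          show d * (t ^ k * x + c) = d * c + (t ^ k * d) * x by ring, AddChar.map_add_eq_mul]
      rw [hcomp]
      exact Submodule.smul_mem _ _ (subset_span ⟨t ^ k * d, hOr_pow i k d hd, rfl⟩)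
    | zero => exact Submodule.zero_mem _
    | add f g _ _ h1 h2 => exact Submodule.add_mem _ h1 h2
    | smul a f _ h1 => exact Submodule.smul_mem _ _ h1
  refine ⟨W, hWinv, ?_, ?_, ?_, ?_, ?_, ?_, ?_⟩
  · -- iSup W = ⊤
    apply eq_top_iff.mpr
    intro f _
    rw [fourier f]
    refine Submodule.sum_mem _ fun c _ => Submodule.smul_mem _ _ ?_
    obtain ⟨i, hi⟩ := hOr_cover c
    exact (le_iSup W i) (subset_span ⟨c, hi, rfl⟩)
  · -- iSupIndep
    intro i
    rw [Submodule.disjoint_def]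
    intro f hfi hfrest
    have hle2 : (⨆ j, ⨆ (_ : j ≠ i), W j) ≤ span ℂ (ee '' (⋃ (j) (_ : j ≠ i), Orb j)) := by
      refine iSup_le fun j => iSup_le fun hj => Submodule.span_mono (Set.image_mono ?_)
      exact Set.subset_iUnion₂ (s := fun j (_ : j ≠ i) => Orb j) j hj
    have hf2 := hle2 hfrest
    have hzero : ∀ c, FF c f = 0 := by
      intro c
      by_cases hc : c ∈ Orb i
      · refine FF_vanish hf2 ?_
        intro hmem
        rw [Set.mem_iUnion₂] at hmem
        obtain ⟨j, hj, hcj⟩ := hmem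
        exact hOr_disj i j (Ne.symm hj) c hc hcj
      · exact FF_vanish hfi hc
    calc f = ∑ c, FF c f • ee c := fourier f
      _ = 0 := Finset.sum_eq_zero fun c _ => by rw [hzero c, zero_smul]
  · -- finrank W 0 = 1
    show Module.finrank ℂ (span ℂ (ee '' Orb 0)) = 1
    rw [hOr0, Set.image_singleton]
    exact finrank_span_singleton (ee_ne_zero 0)
  · -- trivial action on W 0
    intro σ hσ f hf
    have hf' : f ∈ span ℂ {ee (0 : ZMod p)} := by
      have h := hf
      rw [show W 0 = span ℂ (ee '' Orb 0) from rfl, hOr0, Set.image_singleton] at h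
      exact h
    obtain ⟨a, rfl⟩ := Submodule.mem_span_singleton.mp hf'
    funext x
    show (a • ee (0 : ZMod p)) (σ.symm x) = (a • ee (0 : ZMod p)) x
    simp [ee, zero_mul]
  · -- finrank W i = n
    intro i hi
    obtain ⟨j, rfl⟩ := (Fin.eq_zero_or_eq_succ i).resolve_left hi
    show Module.finrank ℂ (span ℂ (ee '' Orb (Fin.succ j))) = n
    rw [hOrS]
    haveI : Fintype (Oset u (κ j)) := Fintype.ofFinite _
    have hind : LinearIndependent ℂ (fun c : Oset u (κ j) => ee (c : ZMod p)) := by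
      rw [Fintype.linearIndependent_iff]
      intro g hg c0
      have h := congrArg (FF (c0 : ZMod p)) hg
      rw [map_sum, map_zero] at h
      have h2 : ∀ c : Oset u (κ j),
          FF (c0 : ZMod p) (g c • ee (c : ZMod p)) = if c = c0 then g c else 0 := by
        intro c
        rw [map_smul, FF_ee, smul_eq_mul]
        by_cases hc : c = c0
        · rw [if_pos (by rw [hc]), if_pos hc, mul_one]
        · rw [if_neg (fun hh => hc (Subtype.ext hh)), if_neg hc, mul_zero]
      rw [Finset.sum_congr rfl fun c _ => h2 c, Finset.sum_ite_eq' Finset.univ c0 g,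
        if_pos (Finset.mem_univ c0)] at h
      exact h
    rw [Set.image_eq_range ee (Oset u (κ j)), finrank_span_eq_card hind,
      ← Nat.card_eq_fintype_card, Oset_card u _, Nat.card_zpowers, hordu]
  · -- irreducibility
    intro i hi U hUle hUinv
    by_cases hU : U = ⊥
    · exact Or.inl hU
    refine Or.inr ?_
    obtain ⟨f, hfU, hf0⟩ := Submodule.exists_mem_ne_zero_of_ne_bot hU
    have hproj : ∀ d : ZMod p, (FF d f) • ee d ∈ U := by
      intro d
      rw [proj_eq]
      refine Submodule.sum_mem _ fun b _ => Submodule.smul_mem _ _ ?_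
      refine hUinv _ ?_ f hfU
      rw [hInn]
      exact Tb_mem ht0 ht1 b
    have hex : ∃ d, FF d f ≠ 0 := by
      by_contra h
      push_neg at h
      refine hf0 ?_
      calc f = ∑ c, FF c f • ee c := fourier f
        _ = 0 := Finset.sum_eq_zero fun c _ => by rw [h c, zero_smul]
    obtain ⟨d, hd⟩ := hex
    have hdOr : d ∈ Orb i := by
      by_contra hdn
      exact hd (FF_vanish (hUle hfU) hdn)
    have heU : ee d ∈ U := by
      have h2 : ee d = (FF d f)⁻¹ • ((FF d f) • ee d) := by
        rw [smul_smul, inv_mul_cancel₀ hd, one_smul]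
      rw [h2]
      exact Submodule.smul_mem _ _ (hproj d)
    have hMmem : (Equiv.mulLeft₀ t ht0)⁻¹ ∈ Inn := by
      rw [hInn]; exact inv_mem (Mul_mem ht0)
    have hpow : ∀ m : ℕ, ee (t ^ m * d) ∈ U := by
      intro m
      induction m with
      | zero => rwa [pow_zero, one_mul]
      | succ m ih =>
        have h3 := hUinv _ hMmem _ ih
        have h4 : ee (t ^ m * d) ∘ ((Equiv.mulLeft₀ t ht0)⁻¹).symm = ee (t ^ (m + 1) * d) := by
          funext x
          show ee (t ^ m * d) (t * x) = ee (t ^ (m + 1) * d) x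
          rw [ee, ee]
          congr 1
          ring
        rwa [h4] at h3
    refine le_antisymm hUle ?_
    show span ℂ (ee '' Orb i) ≤ U
    refine Submodule.span_le.mpr ?_
    rintro _ ⟨c, hc, rfl⟩
    obtain ⟨k, hk⟩ := hOr_rel i c hc d hdOr
    rw [hk]
    exact hpow k
  · -- non-isomorphism
    rintro i j hij ⟨L, hmap, hinj, hequiv⟩
    obtain ⟨d, hd⟩ := hOr_ne i
    have hedWi : ee d ∈ W i := subset_span ⟨d, hd, rfl⟩
    have hgWj : L (ee d) ∈ W j := by rw [← hmap]; exact Submodule.mem_map_of_mem hedWi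
    have hgne : L (ee d) ≠ 0 := by
      intro h0
      have h1 : ee d = 0 := hinj hedWi (Submodule.zero_mem (W i)) (by rw [h0, map_zero])
      exact ee_ne_zero d h1
    have hcoeff : ∀ c, FF c (L (ee d)) = 0 := by
      intro c
      by_cases hcj : c ∈ Orb j
      · have hcd : c ≠ d := fun h => hOr_disj j i (Ne.symm hij) c hcj (h ▸ hd)
        have key : ∀ b : ZMod p, ZMod.stdAddChar (-(d * b)) * FF c (L (ee d))
            = ZMod.stdAddChar (-(c * b)) * FF c (L (ee d)) := by
          intro b
          have hTb : Equiv.addRight b ∈ Inn := by rw [hInn]; exact Tb_mem ht0 ht1 b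
          have h1 := hequiv _ hTb (ee d) hedWi
          rw [Stmt13Aux.comp_translate, map_smul] at h1
          have h2 := congrArg (FF c) h1
          rw [map_smul, FF_translate] at h2
          simpa [smul_eq_mul] using h2
        by_contra hne
        have h3 := mul_right_cancel₀ hne (key 1)
        have h4 := psi_inj h3
        rw [mul_one, mul_one, neg_inj] at h4
        exact hcd h4.symm
      · exact FF_vanish hgWj hcj
    refine hgne ?_
    calc L (ee d) = ∑ c, FF c (L (ee d)) • ee c := fourier _
      _ = 0 := Finset.sum_eq_zero fun c _ => by rw [hcoeff c, zero_smul]
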